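/- Let α > 0 be an irrational real number, let C := {(x,y) ∈ ℝ² : 0 ≤ y ≤ αx}, and let S := C ∩ ℤ². If U is an invertible 2×2 real matrix such that U s ∈ S and U⁻¹ s ∈ S for every s ∈ S, then U is the identity matrix. In particular, the only invertible linear map of ℝ² that maps S bijectively onto S is the identity. -/

import Mathlib

open Matrix Filter

/-- The conical semigroup `S = C ∩ ℤ²` of the irrational planar cone
`C = {(x,y) : 0 ≤ y ≤ α x}`. -/
def irratConeSemigroup (α : ℝ) : Set (Fin 2 → ℝ) :=
  {v | 0 ≤ v 1 ∧ v 1 ≤ α * v 0 ∧ (∃ a : ℤ, v 0 = (a : ℝ)) ∧ (∃ b : ℤ, v 1 = (b : ℝ))}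

lemma irratCone.mem_aux (α : ℝ) (p q : ℤ) (h0 : (0:ℝ) ≤ (q:ℝ)) (h1 : (q:ℝ) ≤ α * p) :
    (![(p:ℝ), (q:ℝ)] : Fin 2 → ℝ) ∈ irratConeSemigroup α := by
  refine ⟨by simpa using h0, by simpa using h1, ⟨p, by simp⟩, ⟨q, by simp⟩⟩

lemma irratCone.mulVec_pair (M : Matrix (Fin 2) (Fin 2) ℝ) (x y : ℝ) :
    M.mulVec ![x, y] = ![M 0 0 * x + M 0 1 * y, M 1 0 * x + M 1 1 * y] := by
  funext i
  fin_cases i <;> simp [Matrix.mulVec, dotProduct, Fin.sum_univ_two]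

/-- Basic facts about a matrix mapping the semigroup into itself:
integer entries, and both cone generator directions map into the cone. -/
lemma irratCone.key (α : ℝ) (hpos : 0 < α)
    (M : Matrix (Fin 2) (Fin 2) ℝ)
    (hM : ∀ s ∈ irratConeSemigroup α, M.mulVec s ∈ irratConeSemigroup α) :
    (∀ i j, ∃ z : ℤ, M i j = (z : ℝ)) ∧
      (0 ≤ M 1 0 ∧ M 1 0 ≤ α * M 0 0) ∧
      (0 ≤ M 1 0 + α * M 1 1 ∧ M 1 0 + α * M 1 1 ≤ α * (M 0 0 + α * M 0 1)) := by
  have h10 : (![(1:ℝ), (0:ℝ)] : Fin 2 → ℝ) ∈ irratConeSemigroup α := by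
    simpa using irratCone.mem_aux α 1 0 (by norm_num) (by simpa using hpos.le)
  set k : ℤ := ⌈α⁻¹⌉ with hk
  have hkpos : (0:ℝ) < α⁻¹ := by positivity
  have hk1 : (1:ℝ) ≤ α * k := by
    have h1 : (α⁻¹ : ℝ) ≤ (k : ℝ) := Int.le_ceil _
    calc (1:ℝ) = α * α⁻¹ := by field_simp
    _ ≤ α * k := by nlinarith
  have hk2 : (![(k:ℝ), (1:ℝ)] : Fin 2 → ℝ) ∈ irratConeSemigroup α := by
    simpa using irratCone.mem_aux α k 1 (by norm_num) (by simpa using hk1)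
  have H1 := hM _ h10
  have H2 := hM _ hk2
  rw [irratCone.mulVec_pair] at H1 H2
  simp only [irratConeSemigroup, Set.mem_setOf_eq, Matrix.cons_val_one, Matrix.head_cons,
    Matrix.cons_val_zero] at H1 H2
  obtain ⟨hc0, hca, ⟨A, hA⟩, ⟨C, hC⟩⟩ := H1
  obtain ⟨-, -, ⟨A2, hA2⟩, ⟨C2, hC2⟩⟩ := H2
  have hA' : M 0 0 = ((A : ℝ)) := by linarith
  have hC' : M 1 0 = ((C : ℝ)) := by linarith
  have hB : M 0 1 = ((A2 - k * A : ℤ) : ℝ) := by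
    push_cast; linear_combination hA2 - (k:ℝ) * hA'
  have hD : M 1 1 = ((C2 - k * C : ℤ) : ℝ) := by
    push_cast; linear_combination hC2 - (k:ℝ) * hC'
  have hc0' : 0 ≤ M 1 0 := by linarith
  have hca' : M 1 0 ≤ α * M 0 0 := by linarith
  refine ⟨?_, ⟨hc0', hca'⟩, ?_⟩
  · intro i j
    fin_cases i <;> fin_cases j
    exacts [⟨A, hA'⟩, ⟨A2 - k * A, hB⟩, ⟨C, hC'⟩, ⟨C2 - k * C, hD⟩]
  · -- limit along lattice points (n, ⌊α n⌋)
    have hIneq : ∀ n : ℕ, 1 ≤ n →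
        0 ≤ M 1 0 + M 1 1 * ((⌊α * n⌋ : ℝ) / n) ∧
        M 1 0 + M 1 1 * ((⌊α * n⌋ : ℝ) / n) ≤ α * (M 0 0 + M 0 1 * ((⌊α * n⌋ : ℝ) / n)) := by
      intro n hn
      have hn0 : (0:ℝ) < n := by exact_mod_cast hn
      have hmem : (![(n:ℝ), ((⌊α * n⌋ : ℤ) : ℝ)] : Fin 2 → ℝ) ∈ irratConeSemigroup α := by
        refine irratCone.mem_aux α n ⌊α * n⌋ ?_ (by exact_mod_cast Int.floor_le _)
        exact_mod_cast Int.floor_nonneg.2 (by positivity)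
      have H := hM _ hmem
      rw [irratCone.mulVec_pair] at H
      simp only [irratConeSemigroup, Set.mem_setOf_eq, Matrix.cons_val_one, Matrix.head_cons,
        Matrix.cons_val_zero] at H
      obtain ⟨h1, h2, -, -⟩ := H
      have e1 : M 1 0 + M 1 1 * ((⌊α * n⌋ : ℝ) / n) =
          (M 1 0 * n + M 1 1 * ((⌊α * n⌋ : ℤ) : ℝ)) / n := by
        push_cast; field_simp
      have e2 : α * (M 0 0 + M 0 1 * ((⌊α * n⌋ : ℝ) / n)) =
          α * (M 0 0 * n + M 0 1 * ((⌊α * n⌋ : ℤ) : ℝ)) / n := by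
        push_cast; field_simp
      constructor
      · rw [e1]; exact div_nonneg h1 hn0.le
      · rw [e1, e2]; exact (div_le_div_iff_of_pos_right hn0).2 h2
    have hf : Tendsto (fun n : ℕ => ((⌊α * n⌋ : ℝ) / n : ℝ)) atTop (nhds α) := by
      have hg : Tendsto (fun n : ℕ => α - 1 / (n:ℝ)) atTop (nhds α) := by
        simpa using (tendsto_const_nhds (x := α)).sub tendsto_one_div_atTop_nhds_zero_nat
      refine tendsto_of_tendsto_of_tendsto_of_le_of_le' hg tendsto_const_nhds ?_ ?_
      · filter_upwards [Filter.eventually_ge_atTop 1] with n hn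
        have hn0 : (0:ℝ) < n := by exact_mod_cast hn
        rw [sub_le_iff_le_add, ← add_div, le_div_iff₀ hn0]
        nlinarith [Int.sub_one_lt_floor (α * (n:ℝ))]
      · filter_upwards [Filter.eventually_ge_atTop 1] with n hn
        have hn0 : (0:ℝ) < n := by exact_mod_cast hn
        rw [div_le_iff₀ hn0]
        exact Int.floor_le _
    have hg : Tendsto (fun n : ℕ => M 1 0 + M 1 1 * ((⌊α * n⌋ : ℝ) / n)) atTop
        (nhds (M 1 0 + M 1 1 * α)) := tendsto_const_nhds.add (hf.const_mul _)
    have hh : Tendsto (fun n : ℕ => α * (M 0 0 + M 0 1 * ((⌊α * n⌋ : ℝ) / n))) atTop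
        (nhds (α * (M 0 0 + M 0 1 * α))) :=
      (tendsto_const_nhds.add (hf.const_mul _)).const_mul α
    have first : 0 ≤ M 1 0 + M 1 1 * α :=
      ge_of_tendsto hg (Filter.eventually_atTop.2 ⟨1, fun n hn => (hIneq n hn).1⟩)
    have second : M 1 0 + M 1 1 * α ≤ α * (M 0 0 + M 0 1 * α) :=
      le_of_tendsto_of_tendsto hg hh (Filter.eventually_atTop.2 ⟨1, fun n hn => (hIneq n hn).2⟩)
    constructor
    · calc (0:ℝ) ≤ M 1 0 + M 1 1 * α := first
      _ = M 1 0 + α * M 1 1 := by ring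
    · calc M 1 0 + α * M 1 1 = M 1 0 + M 1 1 * α := by ring
      _ ≤ α * (M 0 0 + M 0 1 * α) := second
      _ = α * (M 0 0 + α * M 0 1) := by ring

theorem irrational_cone_semigroup_automorphism_trivial
    (α : ℝ) (hirr : Irrational α) (hpos : 0 < α)
    (U : Matrix (Fin 2) (Fin 2) ℝ) (hU : IsUnit U.det)
    (hfwd : ∀ s ∈ irratConeSemigroup α, U.mulVec s ∈ irratConeSemigroup α)
    (hbwd : ∀ s ∈ irratConeSemigroup α, U⁻¹.mulVec s ∈ irratConeSemigroup α) :
    U = 1 := by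
  set V : Matrix (Fin 2) (Fin 2) ℝ := U⁻¹ with hV
  obtain ⟨hUint, ⟨hc0, hca⟩, ⟨hq0, hqa⟩⟩ := irratCone.key α hpos U hfwd
  obtain ⟨hVint, ⟨hc0', hca'⟩, ⟨hq0', hqa'⟩⟩ := irratCone.key α hpos V hbwd
  have hUV : U * V = 1 := Matrix.mul_nonsing_inv U hU
  have e00 : U 0 0 * V 0 0 + U 0 1 * V 1 0 = 1 := by
    have := congrFun (congrFun hUV 0) 0
    simpa [Matrix.mul_apply, Fin.sum_univ_two, Matrix.one_apply] using this
  have e01 : U 0 0 * V 0 1 + U 0 1 * V 1 1 = 0 := by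
    have := congrFun (congrFun hUV 0) 1
    simpa [Matrix.mul_apply, Fin.sum_univ_two, Matrix.one_apply] using this
  have e10 : U 1 0 * V 0 0 + U 1 1 * V 1 0 = 0 := by
    have := congrFun (congrFun hUV 1) 0
    simpa [Matrix.mul_apply, Fin.sum_univ_two, Matrix.one_apply] using this
  have e11 : U 1 0 * V 0 1 + U 1 1 * V 1 1 = 1 := by
    have := congrFun (congrFun hUV 1) 1
    simpa [Matrix.mul_apply, Fin.sum_univ_two, Matrix.one_apply] using this
  -- irrationality helper: if α * x = y for integer-valued reals, then x = y = 0
  have hir : ∀ x y : ℝ, (∃ m : ℤ, x = m) → (∃ n : ℤ, y = n) → α * x = y → x = 0 ∧ y = 0 := by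
    rintro x y ⟨m, rfl⟩ ⟨n, rfl⟩ hxy
    have hm : m = 0 := by
      by_contra hm0
      have : α = ((n / m : ℚ) : ℝ) := by
        have hm' : (m:ℝ) ≠ 0 := Int.cast_ne_zero.2 hm0
        push_cast
        field_simp
        linarith [hxy]
      exact hirr ⟨(n / m : ℚ), this.symm⟩
    subst hm
    simp only [Int.cast_zero, mul_zero] at hxy
    exact ⟨by simp, by simp [← hxy]⟩
  -- Step 1 : U 1 0 = 0
  have hu10 : U 1 0 = 0 := by
    by_contra hne
    have hpos10 : 0 < U 1 0 := lt_of_le_of_ne hc0 (Ne.symm hne)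
    -- decomposition of e10 into two nonnegative pieces
    have t1 : 0 ≤ (V 0 0 - V 1 0 / α) * U 1 0 := by
      have : V 1 0 / α ≤ V 0 0 := by
        rw [div_le_iff₀ hpos]; linarith [hca']
      have h' : 0 ≤ V 0 0 - V 1 0 / α := by linarith
      positivity
    have t2 : 0 ≤ V 1 0 / α * (U 1 0 + α * U 1 1) := by
      have h1 : 0 ≤ V 1 0 / α := div_nonneg hc0' hpos.le
      positivity
    have tsum : (V 0 0 - V 1 0 / α) * U 1 0 + V 1 0 / α * (U 1 0 + α * U 1 1) = 0 := by
      field_simp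
      linear_combination (α : ℝ) * e10
    have t1z : (V 0 0 - V 1 0 / α) * U 1 0 = 0 := by linarith
    have hfac : V 0 0 - V 1 0 / α = 0 := by
      rcases mul_eq_zero.1 t1z with h | h
      · exact h
      · exact absurd h hne
    have hαV : α * V 0 0 = V 1 0 := by
      field_simp at hfac
      linarith [hfac]
    obtain ⟨hV00, hV10⟩ := hir (V 0 0) (V 1 0) (hVint 0 0) (hVint 1 0) hαV
    rw [hV00, hV10] at e00
    simp at e00
  -- Step 2 : V 1 0 = 0
  have hdet : U.det ≠ 0 := hU.ne_zero
  have hdet' : U 0 0 * U 1 1 - U 0 1 * U 1 0 ≠ 0 := by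
    rwa [Matrix.det_fin_two] at hdet
  have hu11ne : U 1 1 ≠ 0 := by
    intro h
    apply hdet'
    rw [h, hu10]; ring
  have hv10 : V 1 0 = 0 := by
    rw [hu10] at e10
    simp at e10
    rcases e10 with h | h
    · exact absurd h hu11ne
    · exact h
  -- Step 3 : U 0 0 = 1 and V 0 0 = 1
  obtain ⟨A, hA⟩ := hUint 0 0
  obtain ⟨A', hA'⟩ := hVint 0 0
  have hAA' : A * A' = 1 := by
    have : (A : ℝ) * (A' : ℝ) = 1 := by
      rw [← hA, ← hA']
      rw [hv10] at e00
      linarith [e00]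
    exact_mod_cast this
  have hAnn : 0 ≤ (A : ℝ) := by
    rw [← hA]
    nlinarith [hc0, hca, hpos]
  have hAint : (0:ℤ) ≤ A := by exact_mod_cast hAnn
  have hA1 : A = 1 := by
    rcases Int.isUnit_iff.1 (IsUnit.of_mul_eq_one _ hAA') with h | h
    · exact h
    · omega
  have hA'1 : A' = 1 := by rw [hA1, one_mul] at hAA'; exact hAA'
  -- Step 4 : U 1 1 = 1 and V 1 1 = 1
  obtain ⟨D, hD⟩ := hUint 1 1
  obtain ⟨D', hD'⟩ := hVint 1 1
  have hDD' : D * D' = 1 := by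
    have : (D : ℝ) * (D' : ℝ) = 1 := by
      rw [← hD, ← hD']
      rw [hu10] at e11
      linarith [e11]
    exact_mod_cast this
  have hDnn : (0:ℤ) ≤ D := by
    have : 0 ≤ (D:ℝ) := by
      rw [← hD]
      rw [hu10] at hq0
      nlinarith [hq0, hpos]
    exact_mod_cast this
  have hD1 : D = 1 := by
    rcases Int.isUnit_iff.1 (IsUnit.of_mul_eq_one _ hDD') with h | h
    · exact h
    · omega
  have hD'1 : D' = 1 := by rw [hD1, one_mul] at hDD'; exact hDD'
  have hU11 : U 1 1 = 1 := by rw [hD, hD1]; norm_num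
  have hV11 : V 1 1 = 1 := by rw [hD', hD'1]; norm_num
  have hU00 : U 0 0 = 1 := by rw [hA, hA1]; norm_num
  have hV00 : V 0 0 = 1 := by rw [hA', hA'1]; norm_num
  -- Step 5 : off-diagonal entries vanish
  have hb : 0 ≤ U 0 1 := by
    rw [hu10, hU11, hU00] at hqa
    nlinarith [hqa, hpos, mul_pos hpos hpos]
  have hb' : 0 ≤ V 0 1 := by
    rw [hv10, hV11, hV00] at hqa'
    nlinarith [hqa', hpos, mul_pos hpos hpos]
  have hU01 : U 0 1 = 0 := by
    rw [hU00, hV11] at e01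
    linarith [e01]
  -- conclude
  ext i j
  fin_cases i <;> fin_cases j <;>
    simp [Matrix.one_apply, hU00, hU01, hu10, hU11]
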